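/- Let G be a functional graph and S a set of nodes. In the graph G − E⁺(S) obtained by deleting all outgoing edges of nodes in S, every node of S lies on no directed cycle; moreover the component of each node i ∈ S in G − E⁺(S) is an in-tree rooted at i, and hence the PageRank of i with α → 1 in G − E⁺(S) equals 1 plus the number of predecessors of i in G − E⁺(S). -/

import Mathlib

open scoped Classical

/-- A walk in a directed graph given by edge relation `E`. -/
def IsWalk {V : Type*} (E : V → V → Prop) (l : List V) : Prop :=
  l ≠ [] ∧ l.Chain' E

/-- Out-degree of a node. -/
noncomputable def outDeg {V : Type*} (E : V → V → Prop) (u : V) : ℕ :=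
  Nat.card {w | E u w}

/-- PageRank of `v`: the sum over all walks `(u₁,…,u_k,v)` ending at `v` of
`α^k / Π_i deg⁺(u_i)`. -/
noncomputable def prSum {V : Type*} (E : V → V → Prop) (α : ℝ) (v : V) : ℝ :=
  ∑' l : {l : List V // IsWalk E l ∧ l.getLast? = some v},
    α ^ (l.val.length - 1) / (l.val.dropLast.map fun u => (outDeg E u : ℝ)).prod

/-- In a functional graph, after removing the outgoing edges `E⁺(S)` of the nodes of
`S`, (i) no node of `S` lies on a directed cycle, (ii) the weak component of each
`i ∈ S` is an in-tree rooted at `i` (every weakly connected node has a directed walk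
to `i`), and (iii) the PageRank of `i` as `α → 1⁻` equals `1` plus the number of
predecessors of `i` in the pruned graph. -/

lemma walk_unique {V : Type*} {E : V → V → Prop}
    (hfun : ∀ u w w', E u w → E u w' → w = w') {i : V} (hiout : ∀ w, ¬ E i w) :
    ∀ (l l' : List V), l.Chain' E → l'.Chain' E →
      l.head? = l'.head? → l.getLast? = some i → l'.getLast? = some i → l = l'
  | [], _, _, _, _, hl, _ => by simp at hl
  | _ :: _, [], _, _, _, _, hl' => by simp at hl'
  | [a], [a'], _, _, hh, hl, hl' => by
      simp only [List.head?_cons, Option.some.injEq] at hh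
      rw [hh]
  | [a], a' :: b' :: t', _, hc', hh, hl, hl' => by
      simp only [List.head?_cons, Option.some.injEq] at hh
      simp only [List.getLast?_singleton, Option.some.injEq] at hl
      exact absurd ((List.isChain_cons_cons.mp hc').1) (by rw [← hh, hl]; exact hiout b')
  | a :: b :: t, [a'], hc, _, hh, hl, hl' => by
      simp only [List.head?_cons, Option.some.injEq] at hh
      simp only [List.getLast?_singleton, Option.some.injEq] at hl'
      exact absurd ((List.isChain_cons_cons.mp hc).1) (by rw [hh, hl']; exact hiout b)
  | a :: b :: t, a' :: b' :: t', hc, hc', hh, hl, hl' => by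
      simp only [List.head?_cons, Option.some.injEq] at hh
      subst hh
      obtain ⟨hab, hcb⟩ := List.isChain_cons_cons.mp hc
      obtain ⟨hab', hcb'⟩ := List.isChain_cons_cons.mp hc'
      obtain rfl := hfun a b b' hab hab'
      rw [List.getLast?_cons_cons] at hl hl'
      rw [walk_unique hfun hiout (b :: t) (b :: t') hcb hcb' rfl hl hl']

lemma walk_of_reach {V : Type*} {E : V → V → Prop} {u i : V}
    (h : Relation.ReflTransGen E u i) :
    ∃ l : List V, l.Chain' E ∧ l ≠ [] ∧ l.head? = some u ∧ l.getLast? = some i := by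
  induction h using Relation.ReflTransGen.head_induction_on with
  | refl => exact ⟨[i], List.isChain_singleton _, by simp, by simp, by simp⟩
  | head hstep _ ih =>
    obtain ⟨l, hc, hne, hh, hl⟩ := ih
    rename_i a c hrest
    obtain ⟨v, t, rfl⟩ : ∃ v t, l = v :: t := by
      cases l with
      | nil => exact absurd rfl hne
      | cons v t => exact ⟨v, t, rfl⟩
    simp only [List.head?_cons, Option.some.injEq] at hh
    subst hh
    exact ⟨a :: v :: t, List.isChain_cons_cons.mpr ⟨hstep, hc⟩, by simp, by simp,
      by rw [List.getLast?_cons_cons]; exact hl⟩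

lemma reach_of_walk {V : Type*} {E : V → V → Prop} {u i : V} :
    ∀ l : List V, l.Chain' E → l.head? = some u → l.getLast? = some i →
      Relation.ReflTransGen E u i
  | [], _, hh, _ => by simp at hh
  | [a], _, hh, hl => by
      simp only [List.head?_cons, Option.some.injEq] at hh
      simp only [List.getLast?_singleton, Option.some.injEq] at hl
      rw [← hh, ← hl]
  | a :: b :: t, hc, hh, hl => by
      simp only [List.head?_cons, Option.some.injEq] at hh
      obtain ⟨hab, hcb⟩ := List.isChain_cons_cons.mp hc
      rw [List.getLast?_cons_cons] at hl
      exact Relation.ReflTransGen.head (hh ▸ hab)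
        (reach_of_walk (b :: t) hcb rfl hl)

lemma chain'_dropLast_succ {V : Type*} {E : V → V → Prop} :
    ∀ l : List V, l.Chain' E → ∀ u ∈ l.dropLast, ∃ w, E u w
  | [], _, u, hu => by simp at hu
  | [a], _, u, hu => by simp at hu
  | a :: b :: t, hc, u, hu => by
      obtain ⟨hab, hcb⟩ := List.isChain_cons_cons.mp hc
      rw [List.dropLast_cons₂, List.mem_cons] at hu
      rcases hu with rfl | hu
      · exact ⟨b, hab⟩
      · exact chain'_dropLast_succ (b :: t) hcb u hu

theorem stmt9 {V : Type*} [Fintype V] (E : V → V → Prop)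
    (hfun : ∀ u w w', E u w → E u w' → w = w') (S : Set V) :
    (∀ i ∈ S, ¬ ∃ l, IsWalk (fun u v => E u v ∧ u ∉ S) l ∧ 2 ≤ l.length ∧
      l.head? = some i ∧ l.getLast? = some i) ∧
    (∀ i ∈ S, ∀ u : V,
      Relation.ReflTransGen
        (fun a b => (E a b ∧ a ∉ S) ∨ (E b a ∧ b ∉ S)) u i →
      Relation.ReflTransGen (fun a b => E a b ∧ a ∉ S) u i) ∧
    (∀ i ∈ S, Filter.Tendsto (fun α : ℝ => prSum (fun u v => E u v ∧ u ∉ S) α i)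
      (nhdsWithin 1 (Set.Iio 1))
      (nhds (1 + (Nat.card {u | u ≠ i ∧ ∃ l, IsWalk (fun a b => E a b ∧ a ∉ S) l ∧
        l.head? = some u ∧ l.getLast? = some i} : ℝ)))) := by
  refine ⟨?_, ?_, ?_⟩
  · rintro i hi ⟨l, ⟨hne, hch⟩, hlen, hhead, hlast⟩
    obtain ⟨a, b, t, rfl⟩ : ∃ a b t, l = a :: b :: t := by
      match l, hne, hlen with
      | [a], _, hlen => simp at hlen
      | a :: b :: t, _, _ => exact ⟨a, b, t, rfl⟩
    simp only [List.head?_cons, Option.some.injEq] at hhead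
    subst hhead
    exact (List.isChain_cons_cons.mp hch).1.2 hi
  · intro i hi u h
    induction h using Relation.ReflTransGen.head_induction_on with
    | refl => exact .refl
    | head hstep _ ih =>
      rename_i a c hrest
      rcases hstep with h1 | h1
      · exact .head h1 ih
      · rcases Relation.ReflTransGen.cases_head ih with rfl | ⟨w, hw, hwi⟩
        · exact absurd hi h1.2
        · obtain rfl := hfun c a w h1.1 hw.1
          exact hwi
  · intro i hi
    have hiout : ∀ w, ¬ (E i w ∧ i ∉ S) := fun w hw => hw.2 hi
    have hfun' : ∀ u w w', (E u w ∧ u ∉ S) → (E u w' ∧ u ∉ S) → w = w' :=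
      fun u w w' h h' => hfun u w w' h.1 h'.1
    set W := {l : List V // IsWalk (fun u v => E u v ∧ u ∉ S) l ∧ l.getLast? = some i}
      with hW
    have hdf : ∀ l : W, l.val ≠ [] := fun l => l.prop.1.1
    have hinj : Function.Injective (fun l : W => l.val.head (hdf l)) := by
      intro l l' h
      apply Subtype.ext
      exact walk_unique hfun' hiout _ _ l.prop.1.2 l'.prop.1.2
        (by rw [List.head?_eq_head (hdf l), List.head?_eq_head (hdf l')]
            exact congrArg some h)
        l.prop.2 l'.prop.2
    haveI : Finite W := Finite.of_injective _ hinj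
    haveI : Fintype W := Fintype.ofFinite W
    have hdeg : ∀ (l : W), ∀ u ∈ l.val.dropLast,
        outDeg (fun u v => E u v ∧ u ∉ S) u = 1 := by
      intro l u hu
      obtain ⟨w, hw⟩ := chain'_dropLast_succ l.val l.prop.1.2 u hu
      have hset : {w | E u w ∧ u ∉ S} = {w} :=
        Set.eq_singleton_iff_unique_mem.mpr ⟨hw, fun w' hw' => hfun' u w' w hw' hw⟩
      rw [outDeg, hset, Nat.card_coe_set_eq, Set.ncard_singleton]
    have hps : ∀ α : ℝ, prSum (fun u v => E u v ∧ u ∉ S) α i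
        = ∑ l : W, α ^ (l.val.length - 1) := by
      intro α
      rw [prSum, tsum_fintype]
      refine Finset.sum_congr rfl fun l _ => ?_
      have hprod : (l.val.dropLast.map
          fun u => (outDeg (fun u v => E u v ∧ u ∉ S) u : ℝ)).prod = 1 := by
        apply List.prod_eq_one
        intro x hx
        obtain ⟨u, hu, rfl⟩ := List.mem_map.mp hx
        rw [hdeg l u hu]; norm_num
      rw [hprod, div_one]
    set T : Set V := {u | u ≠ i ∧ ∃ l, IsWalk (fun a b => E a b ∧ a ∉ S) l ∧
        l.head? = some u ∧ l.getLast? = some i} with hT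
    have hmem : ∀ l : W, l.val.head (hdf l) ∈ insert i T := by
      intro l
      by_cases h : l.val.head (hdf l) = i
      · rw [h]; exact Set.mem_insert _ _
      · exact Set.mem_insert_of_mem _
          ⟨h, l.val, l.prop.1, List.head?_eq_head (hdf l), l.prop.2⟩
    have hbij : Function.Bijective
        (fun l : W => (⟨l.val.head (hdf l), hmem l⟩ : ↥(insert i T))) := by
      constructor
      · intro l l' h
        exact hinj (congrArg Subtype.val h)
      · rintro ⟨u, hu⟩
        rcases hu with rfl | ⟨hne', l, hw, hh, hl⟩
        · refine ⟨⟨[u], ⟨by simp, List.isChain_singleton _⟩, by simp⟩, ?_⟩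
          apply Subtype.ext; simp
        · refine ⟨⟨l, hw, hl⟩, ?_⟩
          apply Subtype.ext
          exact Option.some_injective _ ((List.head?_eq_head hw.1).symm.trans hh)
    have hcardW : Fintype.card W = Nat.card T + 1 := by
      rw [← Nat.card_eq_fintype_card, Nat.card_eq_of_bijective _ hbij,
        Nat.card_coe_set_eq, Nat.card_coe_set_eq,
        Set.ncard_insert_of_notMem (fun h => h.1 rfl) (Set.toFinite T)]
    have hcont : Filter.Tendsto (fun α : ℝ => ∑ l : W, α ^ (l.val.length - 1))
        (nhds 1) (nhds (∑ _l : W, (1 : ℝ))) := by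
      have := (continuous_finset_sum (Finset.univ : Finset W)
        fun l _ => (continuous_pow (l.val.length - 1) : Continuous fun α : ℝ => α ^ _)).tendsto 1
      simpa using this
    rw [Finset.sum_const, Finset.card_univ, nsmul_eq_mul, mul_one] at hcont
    have hcast : (Fintype.card W : ℝ) = 1 + (Nat.card T : ℝ) := by
      rw [hcardW]; push_cast; ring
    rw [hcast] at hcont
    exact Filter.Tendsto.congr (fun α => (hps α).symm)
      (hcont.mono_left nhdsWithin_le_nhds)
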